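/- arXiv:math/0607251 — 2 statements merged into one kernel-verified Lean document; each statement's English description precedes it below -/
import Mathlib

section
/- Fix an integer e>1 and a charge (s_0,s_1)∈ℕ². For every n≥0 and every bipartition λ=(λ^(0),λ^(1)) of rank n, λ belongs to Φ_{e,n}^{(s_0,s_1)} if and only if the swapped bipartition (λ^(1),λ^(0)) belongs to Φ_{e,n}^{(s_1,s_0+e)}. Equivalently, Φ_{e,n}^{(s_1,s_0+e)} = { (λ^(0),λ^(1)) ∈ Π_{2,n} : (λ^(1),λ^(0)) ∈ Φ_{e,n}^{(s_0,s_1)} }. -/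
open Finset

/-- A node `(a, b, c)`: row index `a ≥ 1`, column index `b ≥ 1`, component `c ∈ {0,1}`. -/
abbrev Node : Type := ℕ × ℕ × Fin 2

namespace UglovPaper

/-- Row index of a node. -/
def nrow (γ : Node) : ℕ := γ.1

/-- Column index of a node. -/
def ncol (γ : Node) : ℕ := γ.2.1

/-- Component of a node. -/
def ncomp (γ : Node) : Fin 2 := γ.2.2

/-- A finite set of nodes is the Young diagram of a bipartition iff all indices are `≥ 1`
and the set is closed under moving left in a row and up in a column (in each component). -/
def IsDiagram (D : Finset Node) : Prop :=
  (∀ γ ∈ D, 1 ≤ nrow γ ∧ 1 ≤ ncol γ) ∧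
  (∀ γ ∈ D, ∀ b' : ℕ, 1 ≤ b' → b' ≤ ncol γ → (nrow γ, b', ncomp γ) ∈ D) ∧
  (∀ γ ∈ D, 2 ≤ nrow γ → (nrow γ - 1, ncol γ, ncomp γ) ∈ D)

/-- `part D c a` is the `a`-th part `λ^(c)_a` of the bipartition with diagram `D`. -/
def part (D : Finset Node) (c : Fin 2) (a : ℕ) : ℕ :=
  (D.filter (fun γ => nrow γ = a ∧ ncomp γ = c)).card

/-- The content `b - a + s_c` of a node `(a,b,c)` for the charge `s`. -/
def cont (s : Fin 2 → ℤ) (γ : Node) : ℤ := (ncol γ : ℤ) - (nrow γ : ℤ) + s (ncomp γ)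

/-- The residue mod `e` of a node for the charge `s`. -/
def res (e : ℕ) (s : Fin 2 → ℤ) (γ : Node) : ZMod e := ((cont s γ : ℤ) : ZMod e)

/-- The order `γ <_{(s₀,s₁)} γ'` on nodes. -/
def chargeLT (s : Fin 2 → ℤ) (γ γ' : Node) : Prop :=
  cont s γ < cont s γ' ∨ (cont s γ = cont s γ' ∧ ncomp γ' < ncomp γ)

/-- The positive asymptotic order `γ <_{(v₀,v₁)₊} γ'`. -/
def posLT (γ γ' : Node) : Prop :=
  ncomp γ' < ncomp γ ∨ (ncomp γ = ncomp γ' ∧ nrow γ' < nrow γ)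

/-- The negative asymptotic order `γ <_{(v₀,v₁)₋} γ'`. -/
def negLT (γ γ' : Node) : Prop :=
  ncomp γ < ncomp γ' ∨ (ncomp γ = ncomp γ' ∧ nrow γ' < nrow γ)

/-- `γ` is a removable node of the diagram `D`. -/
def Removable (D : Finset Node) (γ : Node) : Prop := γ ∈ D ∧ IsDiagram (D.erase γ)

/-- `γ` is an addable node of the diagram `D`. -/
def Addable (D : Finset Node) (γ : Node) : Prop := γ ∉ D ∧ IsDiagram (insert γ D)

/-- `γ` is a normal `i`-node of `D` with respect to the order `lt` and the residue map `r`: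
it is a removable `i`-node, and for every `i`-node `η` above it, the number of addable
`i`-nodes in the interval `(γ, η]` does not exceed the number of removable `i`-nodes there.
This is equivalent to surviving the `RA`-deletion process. -/
def NormalNode {α : Type*} (D : Finset Node) (lt : Node → Node → Prop)
    (r : Node → α) (i : α) (γ : Node) : Prop :=
  Removable D γ ∧ r γ = i ∧
  ∀ η : Node, r η = i → lt γ η →
    {x : Node | Addable D x ∧ r x = i ∧ lt γ x ∧ (lt x η ∨ x = η)}.ncard ≤
    {x : Node | Removable D x ∧ r x = i ∧ lt γ x ∧ (lt x η ∨ x = η)}.ncard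

/-- `γ` is the good `i`-node of `D`: the minimal normal `i`-node for the order `lt`. -/
def GoodNode {α : Type*} (D : Finset Node) (lt : Node → Node → Prop)
    (r : Node → α) (i : α) (γ : Node) : Prop :=
  NormalNode D lt r i γ ∧ ∀ δ : Node, NormalNode D lt r i δ → δ = γ ∨ lt γ δ

/-- The recursively defined class of bipartitions labelling the crystal:
the empty bipartition has rank `0`, and a bipartition of rank `n + 1` belongs iff
removing some good `i`-node yields a member of rank `n`. -/
inductive CrystalSet {α : Type*} (lt : Node → Node → Prop) (r : Node → α) :
    ℕ → Finset Node → Prop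
  | empty : CrystalSet lt r 0 ∅
  | step {n : ℕ} {D : Finset Node} {γ : Node} (i : α) :
      IsDiagram D → GoodNode D lt r i γ →
      CrystalSet lt r n (D.erase γ) → CrystalSet lt r (n + 1) D

/-- The set `Φ_{e,n}^{(s₀,s₁)}` of Uglov bipartitions. -/
def UglovSet (e : ℕ) (s : Fin 2 → ℤ) : ℕ → Finset Node → Prop :=
  CrystalSet (chargeLT s) (res e s)

/-- The set `Φ_{e,n}^{(v₀,v₁)₊}` of positive Kleshchev bipartitions. -/
def KleshchevPos (e : ℕ) (v : Fin 2 → ℤ) : ℕ → Finset Node → Prop :=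
  CrystalSet posLT (res e v)

/-- The set `Φ_{e,n}^{(v₀,v₁)₋}` of negative Kleshchev bipartitions. -/
def KleshchevNeg (e : ℕ) (v : Fin 2 → ℤ) : ℕ → Finset Node → Prop :=
  CrystalSet negLT (res e v)

/-- Swapping the two components of a bipartition: `(λ⁽⁰⁾,λ⁽¹⁾) ↦ (λ⁽¹⁾,λ⁽⁰⁾)`. -/
def swapDiagram (D : Finset Node) : Finset Node :=
  D.image (fun γ => (γ.1, γ.2.1, γ.2.2 + 1))

/-! ### Symbols -/

/-- `beta s m D c j` is the `j`-th entry `β^(c)_j = λ^(c)_j − j + s_c + m` of the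
`s`-symbol of `D`, for `1 ≤ j ≤ m + s_c`. -/
def beta (s : Fin 2 → ℕ) (m : ℕ) (D : Finset Node) (c : Fin 2) (j : ℕ) : ℕ :=
  part D c j + (m + s c) - j

/-- The multiset of entries of the row `β^(c)` of the `s`-symbol. -/
def rowM (s : Fin 2 → ℕ) (m : ℕ) (D : Finset Node) (c : Fin 2) : Multiset ℕ :=
  (Finset.Icc 1 (m + s c)).val.map (beta s m D c)

/-- The list of the values `θ(β⁽⁰⁾_{m+s₀}), θ(β⁽⁰⁾_{m+s₀-1}), …` chosen greedily:
at step `k` (handling `p = m + s₀ - k`) we choose the largest entry of the top row not yet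
used that is `≤ β⁽⁰⁾_p`. -/
def thetaList (s : Fin 2 → ℕ) (m : ℕ) (D : Finset Node) : ℕ → List ℕ
  | 0 => []
  | k + 1 =>
      let prev := thetaList s m D k
      prev ++ [((((Finset.Icc 1 (m + s 1)).image (beta s m D 1)).filter
          (fun y => y ∉ prev ∧ y ≤ beta s m D 0 (m + s 0 - k))).max.unbotD 0)]

/-- The greedy injection `θ`, as a function of the index `p ∈ {1, …, m + s₀}`:
`theta s m D p = θ(β⁽⁰⁾_p)`. -/
def theta (s : Fin 2 → ℕ) (m : ℕ) (D : Finset Node) (p : ℕ) : ℕ :=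
  (thetaList s m D (m + s 0)).getD (m + s 0 - p) 0

/-- The bottom row of the symbol obtained by exchanging the entries of every pair:
it is the multiset of the values `θ(β⁽⁰⁾_p)`. -/
def bottomRowNew (s : Fin 2 → ℕ) (m : ℕ) (D : Finset Node) : Multiset ℕ :=
  (Finset.Icc 1 (m + s 0)).val.map (theta s m D)

/-- The top row of the symbol obtained by exchanging the entries of every pair:
all entries of both rows that did not go to the new bottom row. -/
def topRowNew (s : Fin 2 → ℕ) (m : ℕ) (D : Finset Node) : Multiset ℕ :=
  (rowM s m D 0 + rowM s m D 1) - bottomRowNew s m D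

/-- The rows of the symbol of `Υ(λ)`. -/
def newRow (s : Fin 2 → ℕ) (m : ℕ) (D : Finset Node) (c : Fin 2) : Multiset ℕ :=
  if c = 0 then bottomRowNew s m D else topRowNew s m D

/-- The `j`-th largest entry of a multiset of naturals (`j ≥ 1`). -/
def rowEntry (B : Multiset ℕ) (j : ℕ) : ℕ :=
  (B.sort (· ≤ ·)).getD (Multiset.card B - j) 0

/-- The `j`-th part of the partition encoded by a multiset of `card B` distinct
beta-numbers: `λ_j = (j-th largest entry) + j - card B`. -/
def rowPart (B : Multiset ℕ) (j : ℕ) : ℕ :=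
  if 1 ≤ j ∧ j ≤ Multiset.card B then rowEntry B j + j - Multiset.card B else 0

/-- The Young diagram of the bipartition with parts `p`, within the box of size `N`. -/
def toDiagram (p : Fin 2 → ℕ → ℕ) (N : ℕ) : Finset Node :=
  ((Finset.Icc 1 N) ×ˢ (Finset.Icc 1 N) ×ˢ (Finset.univ : Finset (Fin 2))).filter
    (fun γ => γ.2.1 ≤ p γ.2.2 γ.1)

/-- The map `Υ_{(s₀,s₁)}`: exchange the two entries of every pair of the `s`-symbol and
reorder the rows; `Upsilon s m D` is the diagram of the resulting bipartition. -/
def Upsilon (s : Fin 2 → ℕ) (m : ℕ) (D : Finset Node) : Finset Node :=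
  toDiagram (fun c j => rowPart (newRow s m D c) j) D.card

/-- The list of values `τ(α⁽⁰⁾_1), τ(α⁽⁰⁾_2), …` chosen greedily: at step `k + 1`
(handling `p = k + 1`) we choose the smallest entry of the top row `Top` not yet used
that is `≥ b (k+1)`, where `b p` is the `p`-th entry of the bottom row. -/
def tauList (Top : Finset ℕ) (b : ℕ → ℕ) : ℕ → List ℕ
  | 0 => []
  | k + 1 =>
      let prev := tauList Top b k
      prev ++ [((Top.filter (fun y => y ∉ prev ∧ b (k + 1) ≤ y)).min.untopD 0)]

/-- The greedy injection `τ`, as a function of the index `p ∈ {1, …, P}`. -/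
def tau (Top : Finset ℕ) (b : ℕ → ℕ) (P : ℕ) (p : ℕ) : ℕ :=
  (tauList Top b P).getD (p - 1) 0

end UglovPaper
namespace UglovPaper

/-! ### Auxiliary machinery for the swap theorem -/

/-- The swap map on nodes. -/
def swapNode (γ : Node) : Node := (γ.1, γ.2.1, γ.2.2 + 1)

@[simp] lemma swapNode_swapNode (γ : Node) : swapNode (swapNode γ) = γ := by
  obtain ⟨a, b, c⟩ := γ
  fin_cases c <;> exact Prod.ext rfl (Prod.ext rfl (by simp [swapNode]))

lemma swapNode_inj : Function.Injective swapNode := by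
  intro x y h
  have := congrArg swapNode h
  rwa [swapNode_swapNode, swapNode_swapNode] at this

@[simp] lemma nrow_swapNode (γ : Node) : nrow (swapNode γ) = nrow γ := rfl
@[simp] lemma ncol_swapNode (γ : Node) : ncol (swapNode γ) = ncol γ := rfl
lemma ncomp_swapNode (γ : Node) : ncomp (swapNode γ) = ncomp γ + 1 := rfl

lemma swapDiagram_eq_image (D : Finset Node) : swapDiagram D = D.image swapNode := rfl

lemma mem_swapDiagram {D : Finset Node} {γ : Node} :
    γ ∈ swapDiagram D ↔ swapNode γ ∈ D := by
  rw [swapDiagram_eq_image, Finset.mem_image]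
  constructor
  · rintro ⟨x, hx, rfl⟩; rwa [swapNode_swapNode]
  · intro h; exact ⟨swapNode γ, h, swapNode_swapNode γ⟩

lemma swapDiagram_swapDiagram (D : Finset Node) : swapDiagram (swapDiagram D) = D := by
  ext γ; rw [mem_swapDiagram, mem_swapDiagram, swapNode_swapNode]

lemma swapDiagram_erase (D : Finset Node) (γ : Node) :
    swapDiagram (D.erase γ) = (swapDiagram D).erase (swapNode γ) := by
  ext x
  rw [mem_swapDiagram, Finset.mem_erase, Finset.mem_erase, mem_swapDiagram]
  constructor
  · rintro ⟨h1, h2⟩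
    refine ⟨fun hx => h1 ?_, h2⟩
    rw [hx, swapNode_swapNode]
  · rintro ⟨h1, h2⟩
    refine ⟨fun hx => h1 ?_, h2⟩
    rw [← hx, swapNode_swapNode]

lemma swapDiagram_insert (D : Finset Node) (γ : Node) :
    swapDiagram (insert γ D) = insert (swapNode γ) (swapDiagram D) := by
  ext x
  rw [mem_swapDiagram, Finset.mem_insert, Finset.mem_insert, mem_swapDiagram]
  constructor
  · rintro (h | h)
    · left; rw [← h, swapNode_swapNode]
    · right; exact h
  · rintro (h | h)
    · left; rw [h, swapNode_swapNode]
    · right; exact h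

lemma isDiagram_swapDiagram {D : Finset Node} (hD : IsDiagram D) :
    IsDiagram (swapDiagram D) := by
  obtain ⟨h1, h2, h3⟩ := hD
  refine ⟨?_, ?_, ?_⟩
  · intro γ hγ
    exact h1 (swapNode γ) (mem_swapDiagram.mp hγ)
  · intro γ hγ b' hb1 hb2
    rw [mem_swapDiagram]
    exact h2 (swapNode γ) (mem_swapDiagram.mp hγ) b' hb1 hb2
  · intro γ hγ hr
    rw [mem_swapDiagram]
    exact h3 (swapNode γ) (mem_swapDiagram.mp hγ) hr

lemma removable_swap {D : Finset Node} {γ : Node} :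
    Removable (swapDiagram D) γ ↔ Removable D (swapNode γ) := by
  unfold Removable
  rw [mem_swapDiagram]
  constructor
  · rintro ⟨hm, hd⟩
    refine ⟨hm, ?_⟩
    have := isDiagram_swapDiagram hd
    rwa [swapDiagram_erase, swapDiagram_swapDiagram] at this
  · rintro ⟨hm, hd⟩
    refine ⟨hm, ?_⟩
    have := isDiagram_swapDiagram hd
    rwa [swapDiagram_erase, swapNode_swapNode] at this

lemma addable_swap {D : Finset Node} {γ : Node} :
    Addable (swapDiagram D) γ ↔ Addable D (swapNode γ) := by
  unfold Addable
  rw [mem_swapDiagram]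
  constructor
  · rintro ⟨hm, hd⟩
    refine ⟨hm, ?_⟩
    have := isDiagram_swapDiagram hd
    rwa [swapDiagram_insert, swapDiagram_swapDiagram] at this
  · rintro ⟨hm, hd⟩
    refine ⟨hm, ?_⟩
    have := isDiagram_swapDiagram hd
    rwa [swapDiagram_insert, swapNode_swapNode] at this

section Charge

variable (e : ℕ) (t t' : Fin 2 → ℤ)

lemma cont_swap0 (h1 : t' 1 = t 0 + (e : ℤ)) {γ : Node} (hγ : ncomp γ = 0) :
    cont t' (swapNode γ) = cont t γ + (e : ℤ) := by
  unfold cont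
  rw [nrow_swapNode, ncol_swapNode, ncomp_swapNode, hγ]
  have : ((0 : Fin 2) + 1) = 1 := by decide
  rw [this, h1]
  ring

lemma cont_swap1 (h0 : t' 0 = t 1) {γ : Node} (hγ : ncomp γ = 1) :
    cont t' (swapNode γ) = cont t γ := by
  unfold cont
  rw [nrow_swapNode, ncol_swapNode, ncomp_swapNode, hγ]
  have : ((1 : Fin 2) + 1) = 0 := by decide
  rw [this, h0]

lemma res_swap (h0 : t' 0 = t 1) (h1 : t' 1 = t 0 + (e : ℤ)) (γ : Node) :
    res e t' (swapNode γ) = res e t γ := by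
  have hc : ncomp γ = 0 ∨ ncomp γ = 1 := by
    have : ∀ c : Fin 2, c = 0 ∨ c = 1 := by decide
    exact this _
  rcases hc with hc | hc
  · rw [res, res, cont_swap0 e t t' h1 hc]
    push_cast
    simp
  · rw [res, res, cont_swap1 t t' h0 hc]

lemma dvd_of_res_eq {a b : Node} (h : res e t a = res e t b) :
    (e : ℤ) ∣ cont t b - cont t a := by
  rw [res, res] at h
  exact Int.ModEq.dvd ((ZMod.intCast_eq_intCast_iff _ _ _).mp h)

lemma chargeLT_swap (h0 : t' 0 = t 1) (h1 : t' 1 = t 0 + (e : ℤ)) (he : 0 < e)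
    {a b : Node} (hab : res e t a = res e t b) :
    chargeLT t' (swapNode a) (swapNode b) ↔ chargeLT t a b := by
  have hd : (e : ℤ) ∣ cont t b - cont t a := dvd_of_res_eq e t hab
  have hepos : (0 : ℤ) < (e : ℤ) := by exact_mod_cast he
  have hfin : ∀ c : Fin 2, c = 0 ∨ c = 1 := by decide
  unfold chargeLT
  rcases hfin (ncomp a) with ha | ha <;> rcases hfin (ncomp b) with hb | hb
  · rw [cont_swap0 e t t' h1 ha, cont_swap0 e t t' h1 hb,
      ncomp_swapNode, ncomp_swapNode, ha, hb]
    simp only [lt_self_iff_false, and_false, or_false]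
    omega
  · rw [cont_swap0 e t t' h1 ha, cont_swap1 t t' h0 hb,
      ncomp_swapNode, ncomp_swapNode, ha, hb]
    have e1 : ((0 : Fin 2) + 1) = 1 := by decide
    have e2 : ((1 : Fin 2) + 1) = 0 := by decide
    rw [e1, e2]
    have d01 : ((0 : Fin 2) < 1) := by decide
    have d10 : ¬ ((1 : Fin 2) < 0) := by decide
    simp only [d01, and_true, d10, and_false, or_false]
    constructor
    · rintro (h | h) <;> omega
    · intro h
      have hle : (e : ℤ) ≤ cont t b - cont t a := Int.le_of_dvd (by omega) hd
      omega
  · rw [cont_swap1 t t' h0 ha, cont_swap0 e t t' h1 hb,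
      ncomp_swapNode, ncomp_swapNode, ha, hb]
    have e1 : ((0 : Fin 2) + 1) = 1 := by decide
    have e2 : ((1 : Fin 2) + 1) = 0 := by decide
    rw [e1, e2]
    have d01 : ((0 : Fin 2) < 1) := by decide
    have d10 : ¬ ((1 : Fin 2) < 0) := by decide
    simp only [d01, and_true, d10, and_false, or_false]
    constructor
    · intro h
      by_cases hAB : cont t a ≤ cont t b
      · omega
      · have hd2 : (e : ℤ) ∣ cont t a - cont t b := by
          have := hd.neg_right
          rwa [neg_sub] at this
        have hle : (e : ℤ) ≤ cont t a - cont t b := Int.le_of_dvd (by omega) hd2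
        omega
    · rintro (h | h) <;> omega
  · rw [cont_swap1 t t' h0 ha, cont_swap1 t t' h0 hb,
      ncomp_swapNode, ncomp_swapNode, ha, hb]
    simp only [lt_self_iff_false, and_false, or_false]

lemma cont_shift (γ : Node) : cont (fun c => t c + (e : ℤ)) γ = cont t γ + (e : ℤ) := by
  unfold cont
  ring

lemma chargeLT_shift : chargeLT (fun c => t c + (e : ℤ)) = chargeLT t := by
  funext a b
  apply propext
  unfold chargeLT
  rw [cont_shift, cont_shift]
  constructor
  · rintro (h | ⟨h, hc⟩)
    · left; omega
    · exact Or.inr ⟨by omega, hc⟩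
  · rintro (h | ⟨h, hc⟩)
    · left; omega
    · exact Or.inr ⟨by omega, hc⟩

lemma res_shift : res e (fun c => t c + (e : ℤ)) = res e t := by
  funext γ
  rw [res, res, cont_shift]
  push_cast
  simp

lemma image_swapNode_setOf (P : Node → Prop) :
    {x : Node | P (swapNode x)} = swapNode '' {y : Node | P y} := by
  ext x
  constructor
  · intro hx
    exact ⟨swapNode x, hx, swapNode_swapNode x⟩
  · rintro ⟨y, hy, rfl⟩
    show P (swapNode (swapNode y))
    rwa [swapNode_swapNode]

lemma normal_swap (h0 : t' 0 = t 1) (h1 : t' 1 = t 0 + (e : ℤ)) (he : 0 < e)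
    {D : Finset Node} {i : ZMod e} {γ : Node}
    (h : NormalNode D (chargeLT t) (res e t) i γ) :
    NormalNode (swapDiagram D) (chargeLT t') (res e t') i (swapNode γ) := by
  obtain ⟨hrem, hres, hmain⟩ := h
  refine ⟨?_, ?_, ?_⟩
  · rw [removable_swap, swapNode_swapNode]; exact hrem
  · rw [res_swap e t t' h0 h1]; exact hres
  · intro η hη hlt
    have hη0 : res e t (swapNode η) = i := by
      rw [← res_swap e t t' h0 h1 (swapNode η), swapNode_swapNode]; exact hη
    have hlt0 : chargeLT t γ (swapNode η) := by
      rw [← chargeLT_swap e t t' h0 h1 he (hres.trans hη0.symm), swapNode_swapNode]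
      exact hlt
    have hmain' := hmain (swapNode η) hη0 hlt0
    have hkey : ∀ x : Node,
        (res e t' x = i ∧ chargeLT t' (swapNode γ) x ∧ (chargeLT t' x η ∨ x = η)) ↔
        (res e t (swapNode x) = i ∧ chargeLT t γ (swapNode x) ∧
          (chargeLT t (swapNode x) (swapNode η) ∨ swapNode x = swapNode η)) := by
      intro x
      constructor
      · rintro ⟨hx1, hx2, hx3⟩
        have hx1' : res e t (swapNode x) = i := by
          rw [← res_swap e t t' h0 h1 (swapNode x), swapNode_swapNode]; exact hx1
        refine ⟨hx1', ?_, ?_⟩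
        · rw [← chargeLT_swap e t t' h0 h1 he (hres.trans hx1'.symm), swapNode_swapNode]
          exact hx2
        · rcases hx3 with h | h
          · left
            rw [← chargeLT_swap e t t' h0 h1 he (hx1'.trans hη0.symm), swapNode_swapNode,
              swapNode_swapNode]
            exact h
          · right; rw [h]
      · rintro ⟨hx1, hx2, hx3⟩
        have hx1' : res e t' x = i := by
          rw [← swapNode_swapNode x, res_swap e t t' h0 h1]; exact hx1
        refine ⟨hx1', ?_, ?_⟩
        · have hh := (chargeLT_swap e t t' h0 h1 he (hres.trans hx1.symm)).mpr hx2
          rwa [swapNode_swapNode] at hh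
        · rcases hx3 with h | h
          · left
            have hh := (chargeLT_swap e t t' h0 h1 he (hx1.trans hη0.symm)).mpr h
            rwa [swapNode_swapNode, swapNode_swapNode] at hh
          · right; exact swapNode_inj h
    have hA : {x : Node | Addable (swapDiagram D) x ∧ res e t' x = i ∧
          chargeLT t' (swapNode γ) x ∧ (chargeLT t' x η ∨ x = η)} =
        swapNode '' {y : Node | Addable D y ∧ res e t y = i ∧
          chargeLT t γ y ∧ (chargeLT t y (swapNode η) ∨ y = swapNode η)} := by
      rw [← image_swapNode_setOf]
      ext x
      simp only [Set.mem_setOf_eq]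
      rw [addable_swap]
      constructor
      · rintro ⟨hx1, hx2⟩; exact ⟨hx1, (hkey x).mp hx2⟩
      · rintro ⟨hx1, hx2⟩; exact ⟨hx1, (hkey x).mpr hx2⟩
    have hR : {x : Node | Removable (swapDiagram D) x ∧ res e t' x = i ∧
          chargeLT t' (swapNode γ) x ∧ (chargeLT t' x η ∨ x = η)} =
        swapNode '' {y : Node | Removable D y ∧ res e t y = i ∧
          chargeLT t γ y ∧ (chargeLT t y (swapNode η) ∨ y = swapNode η)} := by
      rw [← image_swapNode_setOf]
      ext x
      simp only [Set.mem_setOf_eq]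
      rw [removable_swap]
      constructor
      · rintro ⟨hx1, hx2⟩; exact ⟨hx1, (hkey x).mp hx2⟩
      · rintro ⟨hx1, hx2⟩; exact ⟨hx1, (hkey x).mpr hx2⟩
    rw [hA, hR, Set.ncard_image_of_injective _ swapNode_inj,
      Set.ncard_image_of_injective _ swapNode_inj]
    exact hmain'

lemma good_swap (h0 : t' 0 = t 1) (h1 : t' 1 = t 0 + (e : ℤ)) (he : 0 < e)
    {D : Finset Node} {i : ZMod e} {γ : Node}
    (hg : GoodNode D (chargeLT t) (res e t) i γ) :
    GoodNode (swapDiagram D) (chargeLT t') (res e t') i (swapNode γ) := by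
  obtain ⟨hn, hmin⟩ := hg
  refine ⟨normal_swap e t t' h0 h1 he hn, ?_⟩
  intro δ hδ
  have e0 : (fun c => t c + (e : ℤ)) 0 = t' 1 := by simp [h1]
  have e1 : (fun c => t c + (e : ℤ)) 1 = t' 0 + (e : ℤ) := by simp [h0]
  have hδ' := normal_swap e t' (fun c => t c + (e : ℤ)) e0 e1 he hδ
  rw [swapDiagram_swapDiagram, chargeLT_shift, res_shift] at hδ'
  rcases hmin (swapNode δ) hδ' with h | h
  · left; rw [← h, swapNode_swapNode]
  · right
    have hδres : res e t (swapNode δ) = i := hδ'.2.1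
    have hγres : res e t γ = i := hn.2.1
    have hh := (chargeLT_swap e t t' h0 h1 he (hγres.trans hδres.symm)).mpr h
    rwa [swapNode_swapNode] at hh

lemma crystal_swap (h0 : t' 0 = t 1) (h1 : t' 1 = t 0 + (e : ℤ)) (he : 0 < e)
    {n : ℕ} {D : Finset Node}
    (h : CrystalSet (chargeLT t) (res e t) n D) :
    CrystalSet (chargeLT t') (res e t') n (swapDiagram D) := by
  induction h with
  | empty =>
      have hempty : swapDiagram (∅ : Finset Node) = ∅ := Finset.image_empty _
      rw [hempty]
      exact CrystalSet.empty
  | step i hD hGood hprev ih =>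
      refine CrystalSet.step i (isDiagram_swapDiagram hD)
        (good_swap e t t' h0 h1 he hGood) ?_
      rwa [← swapDiagram_erase]

end Charge

/-- a bipartition `λ` of rank `n` lies in `Φ_{e,n}^{(s₀,s₁)}` iff the swapped
bipartition lies in `Φ_{e,n}^{(s₁,s₀+e)}`. -/
theorem uglovSet_swap (e : ℕ) (he : 1 < e) (s₀ s₁ : ℕ) (n : ℕ)
    (D : Finset Node) (hD : IsDiagram D) (hcard : D.card = n) :
    UglovSet e ![(s₀ : ℤ), (s₁ : ℤ)] n D ↔
      UglovSet e ![(s₁ : ℤ), (s₀ : ℤ) + e] n (swapDiagram D) := by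
  have hepos : 0 < e := by omega
  constructor
  · intro h
    exact crystal_swap e ![(s₀ : ℤ), (s₁ : ℤ)] ![(s₁ : ℤ), (s₀ : ℤ) + e]
      (by simp) (by simp) hepos h
  · intro h
    have h2 := crystal_swap e ![(s₁ : ℤ), (s₀ : ℤ) + e]
      (fun c => ![(s₀ : ℤ), (s₁ : ℤ)] c + (e : ℤ)) (by simp) (by simp) hepos h
    rw [swapDiagram_swapDiagram, chargeLT_shift, res_shift] at h2
    exact h2

end UglovPaper
end

section
/- Fix an integer e>1, a charge (s_0,s_1)∈ℤ², and (v_0,v_1)∈{0,…,e−1}² with v_0 ≡ s_0 (mod e) and v_1 ≡ s_1 (mod e). If s_0 − s_1 > n − 1 − e, then the set of Uglov bipartitions for (s_0,s_1) coincides with the set of positive Kleshchev bipartitions: Φ_{e,n}^{(s_0,s_1)} = Φ_{e,n}^{(v_0,v_1)+}. -/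
open Finset

namespace UglovPaper

/-! ### Auxiliary lemmas for Statement 6 -/

section Aux

variable {e : ℕ} {s : Fin 2 → ℤ} {D : Finset Node}

lemma fin2 (c : Fin 2) : c = 0 ∨ c = 1 := by omega

lemma mem_iff (hD : IsDiagram D) (a b : ℕ) (c : Fin 2) :
    (a, b, c) ∈ D ↔ 1 ≤ b ∧ b ≤ part D c a := by
  constructor
  · intro h
    refine ⟨(hD.1 _ h).2, ?_⟩
    have hcard : (Finset.Icc 1 b).card ≤
        (D.filter (fun γ => nrow γ = a ∧ ncomp γ = c)).card := by
      apply Finset.card_le_card_of_injOn (fun j => ((a, j, c) : Node))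
      · intro j hj
        simp only [Finset.mem_coe, Finset.mem_Icc] at hj
        simp only [Finset.mem_coe, Finset.mem_filter]
        exact ⟨hD.2.1 _ h j hj.1 hj.2, rfl, rfl⟩
      · intro j _ j' _ hjj
        simpa using hjj
    simpa [part] using hcard
  · rintro ⟨hb1, hb2⟩
    by_contra hmem
    have hcard : (D.filter (fun γ => nrow γ = a ∧ ncomp γ = c)).card ≤
        (Finset.Icc 1 (b - 1)).card := by
      apply Finset.card_le_card_of_injOn ncol
      · intro γ hγ
        simp only [Finset.mem_coe, Finset.mem_filter] at hγ
        obtain ⟨hγD, hrow, hcomp⟩ := hγ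
        simp only [Finset.mem_coe, Finset.mem_Icc]
        refine ⟨(hD.1 _ hγD).2, ?_⟩
        by_contra hcol
        push_neg at hcol
        have hbb : b ≤ ncol γ := by omega
        have hmem' := hD.2.1 _ hγD b hb1 hbb
        rw [hrow, hcomp] at hmem'
        exact hmem hmem'
      · intro γ hγ γ' hγ' hcc
        simp only [Finset.coe_filter, Set.mem_setOf_eq] at hγ hγ'
        obtain ⟨_, h1, h2⟩ := hγ
        obtain ⟨_, h1', h2'⟩ := hγ'
        obtain ⟨x1, x2, x3⟩ := γ
        obtain ⟨y1, y2, y3⟩ := γ'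
        simp only [nrow, ncol, ncomp] at h1 h2 h1' h2' hcc
        simp [h1, h2, h1', h2', hcc]
    have : part D c a ≤ b - 1 := by simpa [part] using hcard
    omega

lemma part_succ_le (hD : IsDiagram D) {c : Fin 2} {a : ℕ} (ha : 1 ≤ a) :
    part D c (a + 1) ≤ part D c a := by
  rcases Nat.eq_zero_or_pos (part D c (a + 1)) with h | h
  · omega
  · have hmem : ((a + 1, part D c (a + 1), c) : Node) ∈ D :=
      (mem_iff hD _ _ _).2 ⟨h, le_rfl⟩
    have hmem' := hD.2.2 _ hmem (by simp only [nrow]; omega)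
    simp only [nrow, ncol, ncomp, Nat.add_sub_cancel] at hmem'
    exact ((mem_iff hD _ _ _).1 hmem').2

lemma part_mono (hD : IsDiagram D) {c : Fin 2} {a a' : ℕ} (ha : 1 ≤ a) (h : a ≤ a') :
    part D c a' ≤ part D c a := by
  induction a', h using Nat.le_induction with
  | base => exact le_rfl
  | succ k hk ih => exact le_trans (part_succ_le hD (by omega)) ih

lemma removable_spec (hD : IsDiagram D) {a b : ℕ} {c : Fin 2}
    (h : Removable D (a, b, c)) :
    1 ≤ a ∧ 1 ≤ b ∧ b = part D c a ∧ part D c (a + 1) < b := by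
  obtain ⟨hmem, hD'⟩ := h
  have ha : 1 ≤ a := (hD.1 _ hmem).1
  have hb := (mem_iff hD a b c).1 hmem
  have hbe : b = part D c a := by
    by_contra hne
    have hlt : b < part D c a := lt_of_le_of_ne hb.2 hne
    have h2 : ((a, part D c a, c) : Node) ∈ D := (mem_iff hD _ _ _).2 ⟨by omega, le_rfl⟩
    have h3 : ((a, part D c a, c) : Node) ∈ D.erase (a, b, c) :=
      Finset.mem_erase.2 ⟨by simp only [ne_eq, Prod.mk.injEq]; omega, h2⟩
    have h4 := hD'.2.1 _ h3 b hb.1 (by simp only [ncol]; omega)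
    simp only [nrow, ncol, ncomp] at h4
    exact absurd (Finset.mem_erase.1 h4).1 (by simp)
  refine ⟨ha, hb.1, hbe, ?_⟩
  by_contra hge
  push_neg at hge
  have h2 : ((a + 1, b, c) : Node) ∈ D := (mem_iff hD _ _ _).2 ⟨hb.1, hge⟩
  have h3 : ((a + 1, b, c) : Node) ∈ D.erase (a, b, c) :=
    Finset.mem_erase.2 ⟨by simp only [ne_eq, Prod.mk.injEq]; omega, h2⟩
  have h4 := hD'.2.2 _ h3 (by simp only [nrow]; omega)
  simp only [nrow, ncol, ncomp, Nat.add_sub_cancel] at h4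
  exact absurd (Finset.mem_erase.1 h4).1 (by simp)

lemma addable_spec (hD : IsDiagram D) {a b : ℕ} {c : Fin 2}
    (h : Addable D (a, b, c)) :
    1 ≤ a ∧ b = part D c a + 1 ∧ (2 ≤ a → b ≤ part D c (a - 1)) := by
  obtain ⟨hmem, hD'⟩ := h
  have hself : ((a, b, c) : Node) ∈ insert (a, b, c) D := Finset.mem_insert_self _ _
  have ha : 1 ≤ a := (hD'.1 _ hself).1
  have hb1 : 1 ≤ b := (hD'.1 _ hself).2
  have hgt : part D c a < b := by
    by_contra hle
    push_neg at hle
    exact hmem ((mem_iff hD _ _ _).2 ⟨hb1, hle⟩)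
  have hle : b ≤ part D c a + 1 := by
    by_contra hgt2
    push_neg at hgt2
    have h1 : ((a, b - 1, c) : Node) ∈ insert (a, b, c) D :=
      hD'.2.1 _ hself (b - 1) (by omega) (by simp only [ncol]; omega)
    have h2 : ((a, b - 1, c) : Node) ∈ D := by
      rcases Finset.mem_insert.1 h1 with h | h
      · exfalso
        simp only [Prod.mk.injEq] at h
        omega
      · exact h
    have := ((mem_iff hD _ _ _).1 h2).2
    omega
  refine ⟨ha, by omega, ?_⟩
  intro ha2
  have h1 : ((a - 1, b, c) : Node) ∈ insert (a, b, c) D := by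
    have := hD'.2.2 _ hself (by simpa [nrow] using ha2)
    simpa [nrow, ncol, ncomp] using this
  have h2 : ((a - 1, b, c) : Node) ∈ D := by
    rcases Finset.mem_insert.1 h1 with h | h
    · exfalso
      simp only [Prod.mk.injEq] at h
      omega
    · exact h
  exact ((mem_iff hD _ _ _).1 h2).2

lemma rows_le_card (hD : IsDiagram D) {c : Fin 2} {k : ℕ}
    (hk : ∀ j, 1 ≤ j → j ≤ k → 1 ≤ part D c j) : k ≤ D.card := by
  classical
  have hsub : (Finset.Icc 1 k).image (fun j => ((j, 1, c) : Node)) ⊆ D := by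
    intro γ hγ
    obtain ⟨j, hj, rfl⟩ := Finset.mem_image.1 hγ
    simp only [Finset.mem_Icc] at hj
    exact (mem_iff hD _ _ _).2 ⟨le_rfl, hk j hj.1 hj.2⟩
  have := Finset.card_le_card hsub
  rwa [Finset.card_image_of_injective _ (fun j j' h => by simpa using h),
    Nat.card_Icc, Nat.add_sub_cancel] at this

lemma card_bound (hD : IsDiagram D) {k l : ℕ}
    (hk : ∀ j, 1 ≤ j → j ≤ k → 1 ≤ part D 0 j) (hl : l ≤ part D 1 1) :
    k + l ≤ D.card := by
  classical
  set F0 : Finset Node := (Finset.Icc 1 k).image (fun j => ((j, 1, 0) : Node)) with hF0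
  set F1 : Finset Node := (Finset.Icc 1 l).image (fun t => ((1, t, 1) : Node)) with hF1
  have hsub : F0 ∪ F1 ⊆ D := by
    intro γ hγ
    rcases Finset.mem_union.1 hγ with h | h
    · obtain ⟨j, hj, rfl⟩ := Finset.mem_image.1 h
      simp only [Finset.mem_Icc] at hj
      exact (mem_iff hD _ _ _).2 ⟨le_rfl, hk j hj.1 hj.2⟩
    · obtain ⟨t, ht, rfl⟩ := Finset.mem_image.1 h
      simp only [Finset.mem_Icc] at ht
      exact (mem_iff hD _ _ _).2 ⟨ht.1, le_trans ht.2 hl⟩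
  have hdisj : Disjoint F0 F1 := by
    rw [Finset.disjoint_left]
    intro γ h0 h1
    obtain ⟨j, _, rfl⟩ := Finset.mem_image.1 h0
    obtain ⟨t, _, h⟩ := Finset.mem_image.1 h1
    simp only [Prod.mk.injEq] at h
    exact absurd h.2.2 (by decide)
  have hcard := Finset.card_le_card hsub
  rw [Finset.card_union_of_disjoint hdisj,
    Finset.card_image_of_injective _ (fun j j' h => by simpa using h),
    Finset.card_image_of_injective _ (fun t t' h => by simpa using h),
    Nat.card_Icc, Nat.card_Icc] at hcard
  omega

lemma res_dvd {x y : Node} (hres : res e s x = res e s y) :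
    (e : ℤ) ∣ cont s x - cont s y := by
  have h := (ZMod.intCast_eq_intCast_iff _ _ _).1 hres
  have h2 := Int.ModEq.dvd h
  rw [← neg_sub]
  exact dvd_neg.2 h2

lemma cont_nonneg (hD : IsDiagram D) (he : 1 < e)
    (hcd : (D.card : ℤ) ≤ s 0 - s 1 + e)
    {x y : Node} (hx : Removable D x ∨ Addable D x) (hy : Removable D y ∨ Addable D y)
    (hone : Removable D x ∨ Removable D y)
    (hcx : ncomp x = 0) (hcy : ncomp y = 1)
    (hres : res e s x = res e s y) : 0 ≤ cont s x - cont s y := by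
  obtain ⟨a, b, c⟩ := x
  obtain ⟨a', b', c'⟩ := y
  simp only [ncomp] at hcx hcy
  subst hcx; subst hcy
  have hdvd : (e : ℤ) ∣ cont s (a, b, (0 : Fin 2)) - cont s (a', b', (1 : Fin 2)) :=
    res_dvd hres
  -- bound on y's content
  have hy1 : 1 ≤ a' := by
    rcases hy with h | h
    · exact (removable_spec hD h).1
    · exact (addable_spec hD h).1
  have hyb : b' ≤ part D 1 1 + 1 := by
    have hmono : part D 1 a' ≤ part D 1 1 := part_mono hD le_rfl hy1
    rcases hy with h | h
    · have := (removable_spec hD h).2.2.1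
      omega
    · have := (addable_spec hD h).2.1
      omega
  have hineq : 1 - (e : ℤ) ≤ cont s (a, b, (0 : Fin 2)) - cont s (a', b', (1 : Fin 2)) := by
    have hx1 : 1 ≤ a := by
      rcases hx with h | h
      · exact (removable_spec hD h).1
      · exact (addable_spec hD h).1
    have hxb : 1 ≤ b := by
      rcases hx with h | h
      · exact (removable_spec hD h).2.1
      · have := (addable_spec hD h).2.1; omega
    simp only [cont, ncol, nrow, ncomp]
    rcases hone with hrx | hry
    · -- x removable : rows 1..a of component 0 are nonempty
      obtain ⟨_, hb1, hbe, _⟩ := removable_spec hD hrx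
      have hrows : ∀ j, 1 ≤ j → j ≤ a → 1 ≤ part D 0 j := by
        intro j hj1 hj2
        have := part_mono (c := 0) hD hj1 hj2
        omega
      have hcb := card_bound hD hrows le_rfl
      have hyc : (b' : ℤ) - a' ≤ part D 1 1 := by
        have : (b' : ℤ) ≤ part D 1 1 + 1 := by exact_mod_cast hyb
        have : (1 : ℤ) ≤ a' := by exact_mod_cast hy1
        omega
      have hxc : (1 : ℤ) - a ≤ (b : ℤ) - a := by
        have : (1 : ℤ) ≤ b := by exact_mod_cast hxb
        omega
      have hcb' : (a : ℤ) + part D 1 1 ≤ D.card := by exact_mod_cast hcb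
      omega
    · -- y removable
      obtain ⟨_, hb1', hbe', _⟩ := removable_spec hD hry
      have hyb2 : b' ≤ part D 1 1 := by
        have hmono : part D 1 a' ≤ part D 1 1 := part_mono hD le_rfl hy1
        omega
      have hrows : ∀ j, 1 ≤ j → j ≤ a - 1 → 1 ≤ part D 0 j := by
        intro j hj1 hj2
        rcases hx with h | h
        · obtain ⟨_, hxb1, hxbe, _⟩ := removable_spec hD h
          have := part_mono (c := 0) hD hj1 (show j ≤ a by omega)
          omega
        · obtain ⟨_, hxbe, hxup⟩ := addable_spec hD h
          have ha2 : 2 ≤ a := by omega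
          have h1 := hxup ha2
          have := part_mono (c := 0) hD hj1 (show j ≤ a - 1 by omega)
          omega
      have hcb := card_bound hD hrows le_rfl
      have hcb' : ((a : ℤ) - 1) + part D 1 1 ≤ D.card := by
        have : (a - 1 : ℕ) + part D 1 1 ≤ D.card := hcb
        have h1 : (1 : ℤ) ≤ a := by exact_mod_cast hx1
        push_cast at this ⊢
        omega
      have hyc : (b' : ℤ) - a' ≤ (part D 1 1 : ℤ) - 1 := by
        have h1 : (b' : ℤ) ≤ part D 1 1 := by exact_mod_cast hyb2
        have h2 : (1 : ℤ) ≤ a' := by exact_mod_cast hy1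
        omega
      have hxc : (1 : ℤ) - a ≤ (b : ℤ) - a := by
        have : (1 : ℤ) ≤ b := by exact_mod_cast hxb
        omega
      omega
  -- divisibility plus the bound gives nonnegativity
  obtain ⟨q, hq⟩ := hdvd
  rw [hq] at hineq ⊢
  by_contra hneg
  push_neg at hneg
  have he' : (0 : ℤ) < e := by exact_mod_cast Nat.lt_of_lt_of_le Nat.zero_lt_one he.le
  have hq1 : q ≤ -1 := by nlinarith
  have : (e : ℤ) * q ≤ (e : ℤ) * (-1) := by
    apply mul_le_mul_of_nonneg_left hq1 he'.le
  linarith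

lemma chargeLT_irrefl (s : Fin 2 → ℤ) (x : Node) : ¬ chargeLT s x x := by
  rintro (h | ⟨_, h⟩) <;> exact lt_irrefl _ h

lemma posLT_irrefl (x : Node) : ¬ posLT x x := by
  rintro (h | ⟨_, h⟩) <;> exact lt_irrefl _ h

lemma chargeLT_trans {s : Fin 2 → ℤ} {x y z : Node}
    (h1 : chargeLT s x y) (h2 : chargeLT s y z) : chargeLT s x z := by
  rcases h1 with h1 | ⟨h1, h1'⟩ <;> rcases h2 with h2 | ⟨h2, h2'⟩
  · exact Or.inl (lt_trans h1 h2)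
  · exact Or.inl (h2 ▸ h1)
  · exact Or.inl (h1 ▸ h2)
  · exact Or.inr ⟨h1.trans h2, lt_trans h2' h1'⟩

lemma posLT_trans {x y z : Node} (h1 : posLT x y) (h2 : posLT y z) : posLT x z := by
  rcases h1 with h1 | ⟨h1, h1'⟩ <;> rcases h2 with h2 | ⟨h2, h2'⟩
  · exact Or.inl (lt_trans h2 h1)
  · exact Or.inl (h2 ▸ h1)
  · exact Or.inl (h1 ▸ h2)
  · exact Or.inr ⟨h1.trans h2, lt_trans h2' h1'⟩

lemma cont_strict_same (hD : IsDiagram D) {x y : Node}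
    (hx : Removable D x ∨ Addable D x) (hy : Removable D y ∨ Addable D y)
    (hc : ncomp x = ncomp y) (hr : nrow y < nrow x) : cont s x < cont s y := by
  obtain ⟨a, b, c⟩ := x
  obtain ⟨a', b', c'⟩ := y
  simp only [ncomp] at hc
  subst hc
  simp only [nrow] at hr
  have hy1 : 1 ≤ a' := by
    rcases hy with h | h
    · exact (removable_spec hD h).1
    · exact (addable_spec hD h).1
  have hbx : b ≤ part D c a + 1 := by
    rcases hx with h | h
    · have := (removable_spec hD h).2.2.1; omega
    · have := (addable_spec hD h).2.1; omega
  have hbb : b ≤ b' := by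
    rcases hy with h | h
    · obtain ⟨_, _, h3, h4⟩ := removable_spec hD h
      have hm : part D c a ≤ part D c (a' + 1) := part_mono hD (by omega) (by omega)
      omega
    · obtain ⟨_, h3, _⟩ := addable_spec hD h
      have hm : part D c a ≤ part D c a' := part_mono hD hy1 (by omega)
      omega
  simp only [cont, ncol, nrow, ncomp]
  have hb : (b : ℤ) ≤ b' := by exact_mod_cast hbb
  have ha : (a' : ℤ) < a := by exact_mod_cast hr
  linarith

lemma eq_of_same (hD : IsDiagram D) (he : 1 < e) {x y : Node}
    (hx : Removable D x ∨ Addable D x) (hy : Removable D y ∨ Addable D y)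
    (hc : ncomp x = ncomp y) (hr : nrow x = nrow y)
    (hres : res e s x = res e s y) : x = y := by
  obtain ⟨a, b, c⟩ := x
  obtain ⟨a', b', c'⟩ := y
  simp only [ncomp] at hc
  simp only [nrow] at hr
  subst hc; subst hr
  have hbx : b = part D c a ∨ b = part D c a + 1 := by
    rcases hx with h | h
    · exact Or.inl (removable_spec hD h).2.2.1
    · exact Or.inr (addable_spec hD h).2.1
  have hby : b' = part D c a ∨ b' = part D c a + 1 := by
    rcases hy with h | h
    · exact Or.inl (removable_spec hD h).2.2.1
    · exact Or.inr (addable_spec hD h).2.1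
  by_cases hbb : b = b'
  · subst hbb; rfl
  · exfalso
    have hdvd := res_dvd hres
    have hcont : cont s (a, b, c) - cont s (a, b', c) = (b : ℤ) - b' := by
      simp only [cont, ncol, nrow, ncomp]
      ring
    rw [hcont] at hdvd
    have hd1 : (b : ℤ) - b' = 1 ∨ (b : ℤ) - b' = -1 := by
      rcases hbx with h | h <;> rcases hby with h' | h' <;> [skip; skip; skip; skip] <;>
        first
          | (exfalso; omega)
          | (left; omega)
          | (right; omega)
    have hdvd1 : (e : ℤ) ∣ 1 := by
      rcases hd1 with h | h
      · rwa [h] at hdvd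
      · rw [h] at hdvd
        simpa using dvd_neg.2 hdvd
    have := Int.le_of_dvd one_pos hdvd1
    omega

lemma order_agree (hD : IsDiagram D) (he : 1 < e)
    (hcd : (D.card : ℤ) ≤ s 0 - s 1 + e)
    {x y : Node} (hx : Removable D x ∨ Addable D x) (hy : Removable D y ∨ Addable D y)
    (hone : Removable D x ∨ Removable D y)
    (hres : res e s x = res e s y) :
    (chargeLT s x y ↔ posLT x y) := by
  rcases eq_or_ne (ncomp x) (ncomp y) with hcc | hcc
  · rcases lt_trichotomy (nrow x) (nrow y) with h | h | h
    · have hs := cont_strict_same (s := s) hD hy hx hcc.symm h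
      constructor
      · rintro (h1 | ⟨h1, h2⟩)
        · linarith
        · rw [hcc] at h2; exact absurd h2 (lt_irrefl _)
      · rintro (h1 | ⟨h1, h2⟩)
        · rw [hcc] at h1; exact absurd h1 (lt_irrefl _)
        · omega
    · have hxy : x = y := eq_of_same hD he hx hy hcc h hres
      subst hxy
      exact ⟨fun h' => absurd h' (chargeLT_irrefl s x), fun h' => absurd h' (posLT_irrefl x)⟩
    · have hs := cont_strict_same (s := s) hD hx hy hcc h
      exact ⟨fun _ => Or.inr ⟨hcc, h⟩, fun _ => Or.inl hs⟩
  · rcases fin2 (ncomp x) with hcx | hcx <;> rcases fin2 (ncomp y) with hcy | hcy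
    · exact absurd (hcx.trans hcy.symm) hcc
    · -- x in component 0, y in component 1 : both orders false
      have h0 := cont_nonneg hD he hcd hx hy hone hcx hcy hres
      constructor
      · rintro (h1 | ⟨h1, h2⟩)
        · linarith
        · rw [hcx, hcy] at h2; exact absurd h2 (by decide)
      · rintro (h1 | ⟨h1, _⟩)
        · rw [hcx, hcy] at h1; exact absurd h1 (by decide)
        · exact absurd h1 hcc
    · -- x in component 1, y in component 0 : both orders true
      have h0 := cont_nonneg hD he hcd hy hx hone.symm hcy hcx hres.symm
      constructor
      · intro _
        exact Or.inl (by rw [hcy, hcx]; decide)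
      · intro _
        rcases lt_or_eq_of_le (show cont s x ≤ cont s y by linarith) with h | h
        · exact Or.inl h
        · exact Or.inr ⟨h, by rw [hcx, hcy]; decide⟩
    · exact absurd (hcx.trans hcy.symm) hcc

lemma addable_eq_of_row (hD : IsDiagram D) {x y : Node}
    (hx : Addable D x) (hy : Addable D y)
    (hc : ncomp x = ncomp y) (hr : nrow x = nrow y) : x = y := by
  obtain ⟨a, b, c⟩ := x
  obtain ⟨a', b', c'⟩ := y
  simp only [ncomp] at hc
  simp only [nrow] at hr
  subst hc; subst hr
  have h1 := (addable_spec hD hx).2.1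
  have h2 := (addable_spec hD hy).2.1
  simp [h1, h2]

lemma chargeLT_total_add (hD : IsDiagram D) (he : 1 < e) {x y : Node}
    (hx : Addable D x) (hy : Addable D y) (hres : res e s x = res e s y)
    (hne : x ≠ y) : chargeLT s x y ∨ chargeLT s y x := by
  rcases eq_or_ne (ncomp x) (ncomp y) with hcc | hcc
  · rcases lt_trichotomy (nrow x) (nrow y) with h | h | h
    · exact Or.inr (Or.inl (cont_strict_same hD (Or.inr hy) (Or.inr hx) hcc.symm h))
    · exact absurd (eq_of_same hD he (Or.inr hx) (Or.inr hy) hcc h hres) hne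
    · exact Or.inl (Or.inl (cont_strict_same hD (Or.inr hx) (Or.inr hy) hcc h))
  · rcases lt_trichotomy (cont s x) (cont s y) with h | h | h
    · exact Or.inl (Or.inl h)
    · rcases fin2 (ncomp x) with hcx | hcx <;> rcases fin2 (ncomp y) with hcy | hcy
      · exact absurd (hcx.trans hcy.symm) hcc
      · exact Or.inr (Or.inr ⟨h.symm, by rw [hcx, hcy]; decide⟩)
      · exact Or.inl (Or.inr ⟨h, by rw [hcx, hcy]; decide⟩)
      · exact absurd (hcx.trans hcy.symm) hcc
    · exact Or.inr (Or.inl h)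

lemma posLT_total_add (hD : IsDiagram D) {x y : Node}
    (hx : Addable D x) (hy : Addable D y)
    (hne : x ≠ y) : posLT x y ∨ posLT y x := by
  rcases eq_or_ne (ncomp x) (ncomp y) with hcc | hcc
  · rcases lt_trichotomy (nrow x) (nrow y) with h | h | h
    · exact Or.inr (Or.inr ⟨hcc.symm, h⟩)
    · exact absurd (addable_eq_of_row hD hx hy hcc h) hne
    · exact Or.inl (Or.inr ⟨hcc, h⟩)
  · rcases lt_or_gt_of_ne (fun h : ncomp x = ncomp y => hcc h) with h | h
    · exact Or.inr (Or.inl h)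
    · exact Or.inl (Or.inl h)

lemma exists_max_rel (lt : Node → Node → Prop)
    (htrans : ∀ {x y z : Node}, lt x y → lt y z → lt x z)
    (hirr : ∀ x : Node, ¬ lt x x) :
    ∀ S : Finset Node, S.Nonempty → ∃ m ∈ S, ∀ x ∈ S, ¬ lt m x := by
  intro S
  induction S using Finset.induction_on with
  | empty => rintro ⟨x, hx⟩; simp at hx
  | @insert a S ha ih =>
    intro _
    rcases S.eq_empty_or_nonempty with rfl | hS
    · exact ⟨a, by simp, by simpa using hirr a⟩
    · obtain ⟨m, hm, hmax⟩ := ih hS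
      by_cases h : lt m a
      · refine ⟨a, by simp, ?_⟩
        intro x hx
        rcases Finset.mem_insert.1 hx with h' | hx
        · subst h'
          exact hirr _
        · intro hax
          exact hmax x hx (htrans h hax)
      · refine ⟨m, by simp [hm], ?_⟩
        intro x hx
        rcases Finset.mem_insert.1 hx with h' | hx
        · subst h'
          exact h
        · exact hmax x hx

lemma addable_finite (hD : IsDiagram D) : {x : Node | Addable D x}.Finite := by
  classical
  apply Set.Finite.subset (Finset.finite_toSet
    ((Finset.Icc 1 (D.card + 1)) ×ˢ (Finset.Icc 1 (D.card + 1)) ×ˢ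
      (Finset.univ : Finset (Fin 2))))
  rintro ⟨a, b, c⟩ hx
  simp only [Set.mem_setOf_eq] at hx
  obtain ⟨h1, h2, h3⟩ := addable_spec hD hx
  have hpart1 : part D c 1 ≤ D.card := by
    have : (D.filter (fun γ => nrow γ = 1 ∧ ncomp γ = c)).card ≤ D.card :=
      Finset.card_filter_le _ _
    simpa [part] using this
  have hb : b ≤ D.card + 1 := by
    have := part_mono (c := c) hD le_rfl h1
    omega
  have ha : a ≤ D.card + 1 := by
    by_cases ha2 : 2 ≤ a
    · have hup := h3 ha2
      have hrows : ∀ j, 1 ≤ j → j ≤ a - 1 → 1 ≤ part D c j := by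
        intro j hj1 hj2
        have := part_mono (c := c) hD hj1 (show j ≤ a - 1 by omega)
        omega
      have := rows_le_card hD hrows
      omega
    · omega
  simp only [Finset.coe_product, Finset.coe_univ, Set.mem_prod, Finset.mem_coe,
    Finset.mem_Icc, Set.mem_univ, and_true]
  exact ⟨⟨h1, ha⟩, ⟨by omega, hb⟩⟩

lemma normal_transfer {α : Type*} {r : Node → α} (lt1 lt2 : Node → Node → Prop)
    (ht2 : ∀ {x y z : Node}, lt2 x y → lt2 y z → lt2 x z)
    (ht1 : ∀ {x y z : Node}, lt1 x y → lt1 y z → lt1 x z)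
    (hirr1 : ∀ x : Node, ¬ lt1 x x)
    (hfinA : {x : Node | Addable D x}.Finite)
    (htot1 : ∀ x y : Node, Addable D x → Addable D y → r x = r y → x ≠ y →
      lt1 x y ∨ lt1 y x)
    (hagree : ∀ x y : Node, (Removable D x ∨ Addable D x) →
      (Removable D y ∨ Addable D y) → (Removable D x ∨ Removable D y) →
      r x = r y → (lt1 x y ↔ lt2 x y))
    {i : α} {γ : Node} (h : NormalNode D lt1 r i γ) : NormalNode D lt2 r i γ := by
  classical
  obtain ⟨hrem, hres, hcond⟩ := h
  refine ⟨hrem, hres, ?_⟩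
  intro η hη hγη
  set SA2 := {x : Node | Addable D x ∧ r x = i ∧ lt2 γ x ∧ (lt2 x η ∨ x = η)} with hSA2
  have hfinSA2 : SA2.Finite := hfinA.subset (fun x hx => hx.1)
  rcases Set.eq_empty_or_nonempty SA2 with hemp | hne
  · rw [hemp]
    simp
  · obtain ⟨m, hmS, hmax⟩ := exists_max_rel lt1 ht1 hirr1 hfinSA2.toFinset
      (by simpa [Set.Finite.toFinset] using hne)
    have hmmem : m ∈ SA2 := by simpa using hmS
    obtain ⟨hmAdd, hmres, hγm2, hmη⟩ := hmmem
    have hγm1 : lt1 γ m :=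
      (hagree γ m (Or.inl hrem) (Or.inr hmAdd) (Or.inl hrem)
        (hres.trans hmres.symm)).2 hγm2
    have key := hcond m hmres hγm1
    have hsub1 : SA2 ⊆ {x : Node | Addable D x ∧ r x = i ∧ lt1 γ x ∧ (lt1 x m ∨ x = m)} := by
      rintro x ⟨hxA, hxr, hγx, hxη⟩
      refine ⟨hxA, hxr,
        (hagree γ x (Or.inl hrem) (Or.inr hxA) (Or.inl hrem) (hres.trans hxr.symm)).2 hγx, ?_⟩
      by_cases hxm : x = m
      · exact Or.inr hxm
      · rcases htot1 x m hxA hmAdd (hxr.trans hmres.symm) hxm with h | h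
        · exact Or.inl h
        · exact absurd h (hmax x (by
            simp only [Set.Finite.mem_toFinset]
            exact ⟨hxA, hxr, hγx, hxη⟩))
    have hsub2 : {x : Node | Removable D x ∧ r x = i ∧ lt1 γ x ∧ (lt1 x m ∨ x = m)} ⊆
        {x : Node | Removable D x ∧ r x = i ∧ lt2 γ x ∧ (lt2 x η ∨ x = η)} := by
      rintro x ⟨hxR, hxr, hγx, hxm⟩
      have hxm1 : lt1 x m := by
        rcases hxm with h | rfl
        · exact h
        · exact absurd hxR.1 hmAdd.1
      have hxm2 : lt2 x m :=
        (hagree x m (Or.inl hxR) (Or.inr hmAdd) (Or.inl hxR)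
          (hxr.trans hmres.symm)).1 hxm1
      refine ⟨hxR, hxr,
        (hagree γ x (Or.inl hrem) (Or.inl hxR) (Or.inl hrem) (hres.trans hxr.symm)).1 hγx, ?_⟩
      rcases hmη with h | rfl
      · exact Or.inl (ht2 hxm2 h)
      · exact Or.inl hxm2
    calc SA2.ncard
        ≤ {x : Node | Addable D x ∧ r x = i ∧ lt1 γ x ∧ (lt1 x m ∨ x = m)}.ncard :=
          Set.ncard_le_ncard hsub1 (hfinA.subset (fun x hx => hx.1))
      _ ≤ {x : Node | Removable D x ∧ r x = i ∧ lt1 γ x ∧ (lt1 x m ∨ x = m)}.ncard := key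
      _ ≤ {x : Node | Removable D x ∧ r x = i ∧ lt2 γ x ∧ (lt2 x η ∨ x = η)}.ncard :=
          Set.ncard_le_ncard hsub2
            ((D.finite_toSet).subset (fun x hx => Finset.mem_coe.2 hx.1.1))

lemma normal_iff (hD : IsDiagram D) (he : 1 < e)
    (hcd : (D.card : ℤ) ≤ s 0 - s 1 + e) {i : ZMod e} {γ : Node} :
    NormalNode D (chargeLT s) (res e s) i γ ↔ NormalNode D posLT (res e s) i γ := by
  have hagree : ∀ x y : Node, (Removable D x ∨ Addable D x) →
      (Removable D y ∨ Addable D y) → (Removable D x ∨ Removable D y) →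
      res e s x = res e s y → (chargeLT s x y ↔ posLT x y) :=
    fun x y hx hy hone hres => order_agree hD he hcd hx hy hone hres
  constructor
  · intro h
    exact normal_transfer (chargeLT s) posLT (fun h1 h2 => posLT_trans h1 h2)
      (fun h1 h2 => chargeLT_trans h1 h2) (chargeLT_irrefl s) (addable_finite hD)
      (fun x y hx hy hres hne => chargeLT_total_add hD he hx hy hres hne) hagree h
  · intro h
    exact normal_transfer posLT (chargeLT s) (fun h1 h2 => chargeLT_trans h1 h2)
      (fun h1 h2 => posLT_trans h1 h2) posLT_irrefl (addable_finite hD)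
      (fun x y hx hy _ hne => posLT_total_add hD hx hy hne)
      (fun x y hx hy hone hres => (hagree x y hx hy hone hres).symm) h

lemma good_iff (hD : IsDiagram D) (he : 1 < e)
    (hcd : (D.card : ℤ) ≤ s 0 - s 1 + e) {i : ZMod e} {γ : Node} :
    GoodNode D (chargeLT s) (res e s) i γ ↔ GoodNode D posLT (res e s) i γ := by
  constructor
  · rintro ⟨hn1, hmin⟩
    refine ⟨(normal_iff hD he hcd).1 hn1, ?_⟩
    intro δ hδ
    have hδ1 := (normal_iff hD he hcd).2 hδ
    rcases hmin δ hδ1 with h | h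
    · exact Or.inl h
    · exact Or.inr ((order_agree hD he hcd (Or.inl hn1.1) (Or.inl hδ1.1)
        (Or.inl hn1.1) (hn1.2.1.trans hδ1.2.1.symm)).1 h)
  · rintro ⟨hn2, hmin⟩
    refine ⟨(normal_iff hD he hcd).2 hn2, ?_⟩
    intro δ hδ
    have hδ2 := (normal_iff hD he hcd).1 hδ
    rcases hmin δ hδ2 with h | h
    · exact Or.inl h
    · exact Or.inr ((order_agree hD he hcd (Or.inl hn2.1) (Or.inl hδ2.1)
        (Or.inl hn2.1) (hn2.2.1.trans hδ2.2.1.symm)).2 h)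

lemma crystal_card {α : Type*} {lt : Node → Node → Prop} {r : Node → α} :
    ∀ {n : ℕ} {D : Finset Node}, CrystalSet lt r n D → D.card = n := by
  intro n D h
  induction h with
  | empty => simp
  | @step n D γ i hdiag hgood hprev ih =>
    have hγ : γ ∈ D := hgood.1.1.1
    have h1 := Finset.card_erase_of_mem hγ
    have h2 : 0 < D.card := Finset.card_pos.2 ⟨γ, hγ⟩
    omega

lemma crystal_zero {α : Type*} {lt : Node → Node → Prop} {r : Node → α}
    {D : Finset Node} (h : CrystalSet lt r 0 D) : D = ∅ := by
  cases h
  rfl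

end Aux

/-- if `s₀ - s₁ > n - 1 - e` then `Φ_{e,n}^{(s₀,s₁)} = Φ_{e,n}^{(v₀,v₁)₊}`. -/
theorem uglovSet_eq_kleshchevPos (e : ℕ) (he : 1 < e) (n : ℕ) (s₀ s₁ v₀ v₁ : ℤ)
    (hv₀ : 0 ≤ v₀ ∧ v₀ < e) (hv₁ : 0 ≤ v₁ ∧ v₁ < e)
    (h₀ : Int.ModEq (e : ℤ) v₀ s₀) (h₁ : Int.ModEq (e : ℤ) v₁ s₁)
    (hn : (n : ℤ) - 1 - e < s₀ - s₁) :
    ∀ D : Finset Node, UglovSet e ![s₀, s₁] n D ↔ KleshchevPos e ![v₀, v₁] n D := by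
  have hress : res e ![v₀, v₁] = res e ![s₀, s₁] := by
    funext γ
    unfold res
    rw [ZMod.intCast_eq_intCast_iff]
    unfold cont
    apply Int.ModEq.add_left
    rcases fin2 (ncomp γ) with h | h <;> rw [h]
    · simpa using h₀
    · simpa using h₁
  suffices H : ∀ m : ℕ, m ≤ n → ∀ D : Finset Node,
      CrystalSet (chargeLT ![s₀, s₁]) (res e ![s₀, s₁]) m D ↔
      CrystalSet posLT (res e ![s₀, s₁]) m D by
    intro D
    unfold UglovSet KleshchevPos
    rw [hress]
    exact H n le_rfl D
  intro m
  induction m with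
  | zero =>
    intro _ D
    constructor <;> intro h <;> rw [crystal_zero h] <;> exact CrystalSet.empty
  | succ k ih =>
    intro hkn D
    have hcdof : ∀ γ : Node, γ ∈ D → (D.erase γ).card = k → (D.card : ℤ) ≤
        (![s₀, s₁] : Fin 2 → ℤ) 0 - (![s₀, s₁] : Fin 2 → ℤ) 1 + e := by
      intro γ hγ hcard
      have h1 := Finset.card_erase_of_mem hγ
      have h2 : 0 < D.card := Finset.card_pos.2 ⟨γ, hγ⟩
      have h3 : D.card = k + 1 := by omega
      simp only [Matrix.cons_val_zero, Matrix.cons_val_one, Matrix.head_cons]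
      have h4 : (k : ℤ) + 1 ≤ n := by exact_mod_cast hkn
      omega
    constructor
    · intro h
      cases h with
      | @step _ _ γ i hdiag hgood hprev =>
        have hγ : γ ∈ D := hgood.1.1.1
        have hcd := hcdof γ hγ (crystal_card hprev)
        exact CrystalSet.step i hdiag ((good_iff hdiag he hcd).1 hgood)
          ((ih (by omega) _).1 hprev)
    · intro h
      cases h with
      | @step _ _ γ i hdiag hgood hprev =>
        have hγ : γ ∈ D := hgood.1.1.1
        have hcd := hcdof γ hγ (crystal_card hprev)
        exact CrystalSet.step i hdiag ((good_iff hdiag he hcd).2 hgood)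
          ((ih (by omega) _).2 hprev)

end UglovPaper
end
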